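/- arXiv:2012.04870 — 2 statements merged into one kernel-verified Lean document; each statement's English description precedes it below -/
import Mathlib

section
/- Let U be a Hilbert space, a : U × U → ℂ a bounded sesquilinear form, and T : U → U a bounded linear isomorphism. If the form a^T(u,v) := a(u, T v) is coercive, i.e. there exists c > 0 with |a^T(u,u)| ≥ c‖u‖² for all u ∈ U, then the bounded operator A : U → U defined via the Riesz representation by ⟨A u, v⟩ = a(u,v) is invertible. -/
open ComplexConjugate

/-- if the form `a^T(u,v) = a(u, Tv)` is coercive for some bounded
isomorphism `T`, then the bounded operator `A` representing the bounded sesquilinear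
form `a` is invertible. -/
theorem stmt_3 (U : Type*) [NormedAddCommGroup U] [InnerProductSpace ℂ U] [CompleteSpace U]
    (a : U → U → ℂ)
    (hadd1 : ∀ u u' v, a (u + u') v = a u v + a u' v)
    (hadd2 : ∀ u v v', a u (v + v') = a u v + a u v')
    (hsmul1 : ∀ (c : ℂ) u v, a (c • u) v = conj c * a u v)
    (hsmul2 : ∀ (c : ℂ) u v, a u (c • v) = c * a u v)
    (hbdd : ∃ M : ℝ, ∀ u v, ‖a u v‖ ≤ M * ‖u‖ * ‖v‖)
    (T : U ≃L[ℂ] U)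
    (hcoer : ∃ c : ℝ, 0 < c ∧ ∀ u : U, c * ‖u‖ ^ 2 ≤ ‖a u (T u)‖)
    (A : U →L[ℂ] U) (hA : ∀ u v, (inner ℂ (A u) v : ℂ) = a u v) :
    ∃ B : U →L[ℂ] U, B.comp A = ContinuousLinearMap.id ℂ U ∧
      A.comp B = ContinuousLinearMap.id ℂ U := by
  obtain ⟨c, hc, hco⟩ := hcoer
  -- lower bound : c * ‖u‖ ≤ ‖T‖ * ‖A u‖
  have hTnorm : (0:ℝ) ≤ ‖(T : U →L[ℂ] U)‖ := norm_nonneg _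
  have hlow : ∀ u : U, c * ‖u‖ ≤ ‖(T : U →L[ℂ] U)‖ * ‖A u‖ := by
    intro u
    by_cases h : ‖u‖ = 0
    · simp [h]
      positivity
    · have hu : 0 < ‖u‖ := lt_of_le_of_ne (norm_nonneg u) (Ne.symm h)
      have key : c * ‖u‖ ^ 2 ≤ ‖(T : U →L[ℂ] U)‖ * ‖A u‖ * ‖u‖ := by
        calc c * ‖u‖ ^ 2 ≤ ‖a u (T u)‖ := hco u
          _ = ‖(inner ℂ (A u) (T u) : ℂ)‖ := by rw [hA]
          _ ≤ ‖A u‖ * ‖T u‖ := norm_inner_le_norm _ _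
          _ ≤ ‖A u‖ * (‖(T : U →L[ℂ] U)‖ * ‖u‖) := by
              exact mul_le_mul_of_nonneg_left ((T : U →L[ℂ] U).le_opNorm u) (norm_nonneg _)
          _ = ‖(T : U →L[ℂ] U)‖ * ‖A u‖ * ‖u‖ := by ring
      have := (mul_le_mul_iff_left₀ hu).mp (by nlinarith [key])
      nlinarith [key, hu]
  -- antilipschitz
  have hanti : AntilipschitzWith ⟨‖(T : U →L[ℂ] U)‖ / c, by positivity⟩ A := by
    apply ContinuousLinearMap.antilipschitz_of_bound
    intro x
    have := hlow x
    change ‖x‖ ≤ ‖(T : U →L[ℂ] U)‖ / c * ‖A x‖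
    rw [div_mul_eq_mul_div, le_div_iff₀ hc]
    nlinarith [this]
  have hker : A.ker = ⊥ := LinearMap.ker_eq_bot.mpr hanti.injective
  have hclosed : IsClosed (A.range : Set U) :=
    hanti.isClosed_range A.uniformContinuous
  haveI := hclosed.completeSpace_coe
  have hrange : A.range = ⊤ := by
    rw [← (A.range).orthogonal_orthogonal, Submodule.eq_top_iff']
    intro v w hw
    obtain rfl : w = 0 := by
      have hTw := hco (T.symm w)
      have : a (T.symm w) (T (T.symm w)) = 0 := by
        rw [T.apply_symm_apply, ← hA]
        exact hw _ ⟨T.symm w, rfl⟩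
      rw [this, norm_zero] at hTw
      have : T.symm w = 0 := by
        by_contra h
        have hp : 0 < ‖T.symm w‖ := norm_pos_iff.mpr h
        exact absurd hTw (not_le.mpr (mul_pos hc (pow_pos hp 2)))
      calc w = T (T.symm w) := (T.apply_symm_apply w).symm
        _ = 0 := by rw [this, map_zero]
    exact inner_zero_left _
  refine ⟨(ContinuousLinearEquiv.ofBijective A hker hrange).symm, ?_, ?_⟩
  · ext x
    exact ContinuousLinearEquiv.ofBijective_symm_apply_apply A hker hrange x
  · ext x
    exact ContinuousLinearEquiv.ofBijective_apply_symm_apply A hker hrange x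
end

section
/- Let H and L be Hilbert spaces, B : H → L a compact linear operator with dense range, and φ ∈ L an element not in the range of B. Suppose (g_n) is a sequence in H such that B g_n → φ in L. Then ‖g_n‖ → ∞. -/
open Filter Topology

local notation "⟪" x ", " y "⟫" => @inner ℂ _ _ x y

/-- Auxiliary: if `B gₙ → φ` and `(gₙ)` is bounded, then `φ ∈ range B`. -/
lemma aux_mem_range {H L : Type*}
    [NormedAddCommGroup H] [InnerProductSpace ℂ H] [CompleteSpace H]
    [NormedAddCommGroup L] [InnerProductSpace ℂ L] [CompleteSpace L]
    (B : H →L[ℂ] L) (φ : L) (g : ℕ → H) (R : ℝ)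
    (hbd : ∀ n, ‖g n‖ ≤ R)
    (hconv : Tendsto (fun n => B (g n)) atTop (𝓝 φ)) :
    φ ∈ Set.range B := by
  set A := ContinuousLinearMap.adjoint B with hA
  have key : ∀ ψ : L, ‖⟪φ, ψ⟫‖ ≤ R * ‖A ψ‖ := by
    intro ψ
    have h1 : Tendsto (fun n => ⟪B (g n), ψ⟫) atTop (𝓝 ⟪φ, ψ⟫) :=
      hconv.inner tendsto_const_nhds
    refine le_of_tendsto h1.norm (Filter.Eventually.of_forall fun n => ?_)
    have h2 : ⟪B (g n), ψ⟫ = ⟪g n, A ψ⟫ :=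
      (ContinuousLinearMap.adjoint_inner_right B (g n) ψ).symm
    rw [h2]
    calc ‖⟪g n, A ψ⟫‖ ≤ ‖g n‖ * ‖A ψ‖ := norm_inner_le_norm _ _
      _ ≤ R * ‖A ψ‖ := by
          exact mul_le_mul_of_nonneg_right (hbd n) (norm_nonneg _)
  have welldef : ∀ ψ₁ ψ₂ : L, A ψ₁ = A ψ₂ → ⟪φ, ψ₁⟫ = ⟪φ, ψ₂⟫ := by
    intro ψ₁ ψ₂ h
    have := key (ψ₁ - ψ₂)
    rw [map_sub, h, sub_self, norm_zero, mul_zero] at this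
    have h0 : ⟪φ, ψ₁ - ψ₂⟫ = 0 := norm_le_zero_iff.mp this
    rw [inner_sub_right, sub_eq_zero] at h0
    exact h0
  set p : Submodule ℂ H := LinearMap.range (A : L →ₗ[ℂ] H) with hp
  have pick : ∀ x : p, ∃ ψ : L, A ψ = (x : H) := fun x => LinearMap.mem_range.mp x.2
  choose pk hpk using pick
  have f0_eq : ∀ (x : p) (ψ : L), A ψ = (x : H) → ⟪φ, pk x⟫ = ⟪φ, ψ⟫ := by
    intro x ψ h
    exact welldef _ _ ((hpk x).trans h.symm)
  let f0 : p →ₗ[ℂ] ℂ :=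
    { toFun := fun x => ⟪φ, pk x⟫
      map_add' := by
        intro x y
        have : A (pk x + pk y) = ((x + y : p) : H) := by
          rw [map_add, hpk, hpk]; rfl
        show ⟪φ, pk (x + y)⟫ = ⟪φ, pk x⟫ + ⟪φ, pk y⟫
        rw [f0_eq (x + y) (pk x + pk y) this, inner_add_right]
      map_smul' := by
        intro c x
        have : A (c • pk x) = ((c • x : p) : H) := by
          rw [map_smul, hpk]; rfl
        show ⟪φ, pk (c • x)⟫ = (RingHom.id ℂ) c • ⟪φ, pk x⟫
        rw [f0_eq (c • x) (c • pk x) this, inner_smul_right]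
        rfl }
  have hf0bound : ∀ x : p, ‖f0 x‖ ≤ R * ‖x‖ := by
    intro x
    have := key (pk x)
    rw [hpk x] at this
    exact this
  let f1 : p →L[ℂ] ℂ := LinearMap.mkContinuous f0 R hf0bound
  obtain ⟨F, hF, -⟩ := exists_extension_norm_eq p f1
  set g0 : H := (InnerProductSpace.toDual ℂ H).symm F with hg0
  have hg0' : ∀ x : H, ⟪g0, x⟫ = F x := by
    intro x
    rw [hg0, InnerProductSpace.toDual_symm_apply]
  refine ⟨g0, ?_⟩
  refine ext_inner_right ℂ fun ψ => ?_
  have hmem : A ψ ∈ p := LinearMap.mem_range_self (A : L →ₗ[ℂ] H) ψ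
  have h3 : ⟪B g0, ψ⟫ = ⟪g0, A ψ⟫ :=
    (ContinuousLinearMap.adjoint_inner_right B g0 ψ).symm
  rw [h3, hg0' (A ψ)]
  have h4 : F (A ψ) = f1 ⟨A ψ, hmem⟩ := hF ⟨A ψ, hmem⟩
  rw [h4]
  exact f0_eq ⟨A ψ, hmem⟩ ψ rfl

/-- if `B` is a compact operator with dense range, `φ` is not in the range
of `B`, and `B gₙ → φ`, then `‖gₙ‖ → ∞`. -/
theorem stmt_4 (H L : Type*)
    [NormedAddCommGroup H] [InnerProductSpace ℂ H] [CompleteSpace H]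
    [NormedAddCommGroup L] [InnerProductSpace ℂ L] [CompleteSpace L]
    (B : H →L[ℂ] L) (hB : IsCompactOperator B) (hdense : DenseRange B)
    (φ : L) (hφ : φ ∉ Set.range B)
    (g : ℕ → H) (hconv : Tendsto (fun n => B (g n)) atTop (𝓝 φ)) :
    Tendsto (fun n => ‖g n‖) atTop atTop := by
  by_contra hcon
  rw [tendsto_atTop_atTop] at hcon
  push_neg at hcon
  obtain ⟨b, hb⟩ := hcon
  obtain ⟨k, hk_mono, hk⟩ := Nat.exists_strictMono_subsequence (fun N => by
    obtain ⟨a, ha, hab⟩ := hb (N + 1)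
    exact ⟨a, Nat.lt_of_succ_le ha, hab⟩)
  exact hφ (aux_mem_range B φ (g ∘ k) b (fun n => (hk n).le)
    (hconv.comp hk_mono.tendsto_atTop))
end
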